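/- arXiv:1612.01144 — 4 statements merged into one kernel-verified Lean document; each statement's English description precedes it below -/
import Mathlib

section
/- Let k be a field of characteristic zero, X ⊆ 𝔸ⁿ⁺¹ an affine variety that is the cone over a projective variety (i.e., its vanishing ideal I ⊆ k[x₀,…,xₙ] is homogeneous) with x₀ ∉ I. Suppose δ is a derivation of the localization k[X][1/x₀] which is locally nilpotent and satisfies δ(x₀) = 0. Then there exists d ∈ ℕ such that the derivation x₀^{d+1}·δ maps k[X] into k[X] and is a locally nilpotent derivation of k[X] that vanishes on the quotient ring k[X]/(x₀). -/
theorem aux_lift {k : Type*} [Field k] {A : Type*} [CommRing A] [IsDomain A]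
    [Algebra k A] {N : ℕ} (g : Fin N → A)
    (hgen : Algebra.adjoin k (Set.range g) = ⊤)
    (t : A) (ht : t ≠ 0)
    {L : Type*} [CommRing L] [Algebra k L] [Algebra A L] [IsScalarTower k A L]
    (hLoc : IsLocalization.Away t L)
    (δ : Derivation k L L)
    (hnilp : ∀ x : L, ∃ m : ℕ, (⇑δ)^[m] x = 0)
    (hδt : δ (algebraMap A L t) = 0) :
    ∃ (d : ℕ) (δ' : Derivation k A A),
      (∀ x : A, algebraMap A L (δ' x) =
          (algebraMap A L t) ^ (d + 1) * δ (algebraMap A L x)) ∧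
      (∀ x, ∃ m : ℕ, (⇑δ')^[m] x = 0) ∧
      (∀ x, δ' x ∈ Ideal.span {t}) := by
  classical
  set φ : A →ₐ[k] L := IsScalarTower.toAlgHom k A L with hφ
  have hφmap : ∀ a : A, φ a = algebraMap A L a := fun a => rfl
  have hinj : Function.Injective (algebraMap A L) :=
    IsLocalization.injective L (powers_le_nonZeroDivisors_of_noZeroDivisors ht)
  set T : L := algebraMap A L t with hT
  -- choose exponents for the generators
  have hsur : ∀ x : L, ∃ (a : A) (m : ℕ), T ^ m * x = algebraMap A L a := by
    intro x
    obtain ⟨⟨a, s⟩, hs⟩ := IsLocalization.surj (Submonoid.powers t) x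
    obtain ⟨m, hm⟩ := s.2
    refine ⟨a, m, ?_⟩
    rw [mul_comm, hT, ← map_pow, show t ^ m = (s : A) from hm]
    exact hs
  choose b e hbe using fun i => hsur (δ (algebraMap A L (g i)))
  set d : ℕ := Finset.univ.sup e with hd
  -- the key subalgebra
  set S : Subalgebra k L :=
    { carrier := {x | (∃ a : A, algebraMap A L a = x) ∧
        (∃ c : A, algebraMap A L c = T ^ d * δ x)}
      mul_mem' := by
        rintro x y ⟨⟨a, ha⟩, ⟨c, hc⟩⟩ ⟨⟨a', ha'⟩, ⟨c', hc'⟩⟩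
        refine ⟨⟨a * a', by rw [map_mul, ha, ha']⟩, ⟨a * c' + a' * c, ?_⟩⟩
        rw [Derivation.leibniz, smul_eq_mul, smul_eq_mul, mul_add, map_add, map_mul,
          map_mul, ha, ha', hc, hc']
        ring
      add_mem' := by
        rintro x y ⟨⟨a, ha⟩, ⟨c, hc⟩⟩ ⟨⟨a', ha'⟩, ⟨c', hc'⟩⟩
        refine ⟨⟨a + a', by rw [map_add, ha, ha']⟩, ⟨c + c', ?_⟩⟩
        rw [map_add, map_add, mul_add, hc, hc']
      algebraMap_mem' := by
        intro r
        refine ⟨⟨algebraMap k A r, (IsScalarTower.algebraMap_apply k A L r).symm⟩,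
          ⟨0, ?_⟩⟩
        rw [Derivation.map_algebraMap, mul_zero, map_zero] } with hS
  have hgenS : ∀ i, algebraMap A L (g i) ∈ S := by
    intro i
    refine ⟨⟨g i, rfl⟩, ⟨t ^ (d - e i) * b i, ?_⟩⟩
    have : T ^ d = T ^ (d - e i) * T ^ (e i) := by
      rw [← pow_add, Nat.sub_add_cancel (Finset.le_sup (Finset.mem_univ i))]
    rw [this, map_mul, map_pow, mul_assoc, hbe i]
  have hmemS : ∀ a : A, algebraMap A L a ∈ S := by
    intro a
    have h1 : Algebra.adjoin k (Set.range fun i => algebraMap A L (g i)) ≤ S := by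
      apply Algebra.adjoin_le
      rintro x ⟨i, rfl⟩; exact hgenS i
    have h2 : algebraMap A L a ∈ Algebra.adjoin k (Set.range fun i => algebraMap A L (g i)) := by
      have : (Set.range fun i => algebraMap A L (g i)) = φ '' Set.range g := by
        rw [← Set.range_comp]; rfl
      rw [this, ← AlgHom.map_adjoin, hgen]
      exact ⟨a, trivial, rfl⟩
    exact h1 h2
  have hkey : ∀ a : A, ∃ c : A, algebraMap A L c = T ^ d * δ (algebraMap A L a) :=
    fun a => (hmemS a).2
  choose D0 hD0 using hkey
  have hval : ∀ a : A, algebraMap A L (t * D0 a) = T ^ (d + 1) * δ (algebraMap A L a) := by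
    intro a
    rw [map_mul, hD0, pow_succ, ← hT]; ring
  -- build the derivation
  set δ' : Derivation k A A :=
    { toFun := fun a => t * D0 a
      map_add' := by
        intro a a'
        apply hinj
        rw [map_add, hval, hval, hval, map_add, map_add, mul_add]
      map_smul' := by
        intro r a
        apply hinj
        show φ (t * D0 (r • a)) = φ (r • (t * D0 a))
        rw [map_smul]
        show algebraMap A L (t * D0 (r • a)) = r • algebraMap A L (t * D0 a)
        rw [hval, hval, Algebra.smul_def r a, map_mul, ← IsScalarTower.algebraMap_apply,
          ← Algebra.smul_def, Derivation.map_smul, mul_smul_comm]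
      map_one_eq_zero' := by
        apply hinj
        show algebraMap A L (t * D0 1) = algebraMap A L 0
        rw [hval, map_one, Derivation.map_one_eq_zero, mul_zero, map_zero]
      leibniz' := by
        intro a a'
        apply hinj
        show algebraMap A L (t * D0 (a * a')) =
          algebraMap A L (a * (t * D0 a') + a' * (t * D0 a))
        simp only [map_add, map_mul, hD0, Derivation.leibniz, smul_eq_mul, hT]
        ring } with hδ'
  have hδ'val : ∀ a : A, algebraMap A L (δ' a) = T ^ (d + 1) * δ (algebraMap A L a) := hval
  refine ⟨d, δ', hδ'val, ?_, ?_⟩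
  · -- local nilpotence
    have hpow0 : δ (T ^ (d + 1)) = 0 := by
      rw [Derivation.leibniz_pow, hδt, smul_zero, smul_zero]
    have hcomm : ∀ x : L, δ (T ^ (d + 1) * x) = T ^ (d + 1) * δ x := by
      intro x
      rw [Derivation.leibniz, hpow0, smul_zero, add_zero, smul_eq_mul]
    have hiterc : ∀ (m : ℕ) (x : L), (⇑δ)^[m] (T ^ (d + 1) * x) = T ^ (d + 1) * (⇑δ)^[m] x := by
      intro m
      induction m with
      | zero => intro x; simp
      | succ m ih =>
        intro x
        rw [Function.iterate_succ_apply, hcomm, ih, Function.iterate_succ_apply]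
    have hiter : ∀ (m : ℕ) (a : A),
        algebraMap A L ((⇑δ')^[m] a) = T ^ ((d + 1) * m) * (⇑δ)^[m] (algebraMap A L a) := by
      intro m
      induction m with
      | zero => intro a; simp
      | succ m ih =>
        intro a
        rw [Function.iterate_succ_apply, ih, hδ'val, hiterc, ← Function.iterate_succ_apply,
          mul_add, mul_one, pow_add]
        ring
    intro a
    obtain ⟨m, hm⟩ := hnilp (algebraMap A L a)
    refine ⟨m, hinj ?_⟩
    rw [hiter, hm, mul_zero, map_zero]
  · intro a
    exact Ideal.mem_span_singleton.2 ⟨D0 a, rfl⟩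


set_option synthInstance.maxHeartbeats 1000000 in
/-- Lifting of `Gₐ`-actions to affine cones (Lemma `lifting`): let
`X = Spec k[x₀,…,xₙ]/I` be the affine cone over a projective variety (`I` a
homogeneous prime ideal with `x₀ ∉ I`) and let `δ` be a locally nilpotent
`k`-derivation of the localization `k[X][1/x₀]` with `δ(x₀) = 0`. Then for some
`d ∈ ℕ` the derivation `x₀^{d+1}·δ` restricts to a locally nilpotent
`k`-derivation `δ'` of `k[X]` all of whose values lie in the ideal `(x₀)`,
i.e. `δ'` vanishes on `k[X]/(x₀)`. -/
theorem stmt1 {k : Type*} [Field k] [CharZero k] {n : ℕ}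
    (I : Ideal (MvPolynomial (Fin (n + 1)) k)) (hprime : I.IsPrime)
    (hIhom : ∀ f ∈ I, ∀ i : ℕ, MvPolynomial.homogeneousComponent i f ∈ I)
    (hx0 : (MvPolynomial.X 0 : MvPolynomial (Fin (n + 1)) k) ∉ I)
    {L : Type*} [CommRing L] [Algebra k L]
    [Algebra (MvPolynomial (Fin (n + 1)) k ⧸ I) L]
    [IsScalarTower k (MvPolynomial (Fin (n + 1)) k ⧸ I) L]
    (hLoc : IsLocalization.Away (Ideal.Quotient.mk I (MvPolynomial.X 0)) L)
    (δ : Derivation k L L)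
    (hnilp : ∀ x : L, ∃ m : ℕ, (⇑δ)^[m] x = 0)
    (hδx0 : δ (algebraMap (MvPolynomial (Fin (n + 1)) k ⧸ I) L
      (Ideal.Quotient.mk I (MvPolynomial.X 0))) = 0) :
    ∃ (d : ℕ) (δ' : Derivation k (MvPolynomial (Fin (n + 1)) k ⧸ I)
        (MvPolynomial (Fin (n + 1)) k ⧸ I)),
      (∀ x : MvPolynomial (Fin (n + 1)) k ⧸ I,
          algebraMap (MvPolynomial (Fin (n + 1)) k ⧸ I) L (δ' x) =
            (algebraMap (MvPolynomial (Fin (n + 1)) k ⧸ I) L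
              (Ideal.Quotient.mk I (MvPolynomial.X 0))) ^ (d + 1) *
              δ (algebraMap (MvPolynomial (Fin (n + 1)) k ⧸ I) L x)) ∧
      (∀ x, ∃ m : ℕ, (⇑δ')^[m] x = 0) ∧
      (∀ x, δ' x ∈ Ideal.span {Ideal.Quotient.mk I (MvPolynomial.X 0)}) := by
  classical
  haveI := hprime
  set t : MvPolynomial (Fin (n + 1)) k ⧸ I := Ideal.Quotient.mk I (MvPolynomial.X 0) with htdef
  have ht : t ≠ 0 := by
    simpa [htdef, Ideal.Quotient.eq_zero_iff_mem] using hx0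
  have hgen : Algebra.adjoin k
      (Set.range fun i => Ideal.Quotient.mk I (MvPolynomial.X i)) = ⊤ := by
    have h1 : (Set.range fun i : Fin (n + 1) => Ideal.Quotient.mk I (MvPolynomial.X i)) =
        (Ideal.Quotient.mkₐ k I) '' Set.range MvPolynomial.X := by
      rw [← Set.range_comp]; rfl
    rw [h1, ← AlgHom.map_adjoin, MvPolynomial.adjoin_range_X, Algebra.map_top]
    exact (AlgHom.range_eq_top _).mpr (Ideal.Quotient.mkₐ_surjective k I)
  exact aux_lift (fun i => Ideal.Quotient.mk I (MvPolynomial.X i)) hgen t ht hLoc δ hnilp hδx0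
end

section
/- Let h : N_ℚ → ℚ be a concave piecewise affine function with linear part lin h, and set Box_h = {u ∈ M_ℚ : ⟨u, v⟩ ≥ (lin h)(v) for all v ∈ N_ℚ}. Define h*(u) = inf_{v ∈ N_ℚ} (⟨u, v⟩ − h(v)). Then for every u ∈ Box_h, the infimum h*(u) is finite, i.e., the function v ↦ ⟨u,v⟩ − h(v) is bounded below. -/
/-- Finiteness of the dual `h*` on the box `Box_h`: let `h` be a concave
piecewise affine function, written as the (finite) minimum of affine functions
`ℓ t + a t`, so that its linear part is `lin h = min_t ℓ t`. If `u ∈ Box_h`,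
i.e. `⟨u, v⟩ ≥ (lin h)(v)` for all `v`, then
`h*(u) = inf_v (⟨u, v⟩ − h(v))` is finite, i.e. `v ↦ ⟨u, v⟩ − h(v)` is bounded
below. -/
theorem stmt11 {V : Type*} [AddCommGroup V] [Module ℚ V] (r : ℕ)
    (ℓ : Fin (r + 1) → V →ₗ[ℚ] ℚ) (a : Fin (r + 1) → ℚ)
    (h : V → ℚ)
    (hh : ∀ x, h x = Finset.univ.inf' Finset.univ_nonempty (fun t => ℓ t x + a t))
    (u : V →ₗ[ℚ] ℚ)
    (hu : ∀ v, Finset.univ.inf' Finset.univ_nonempty (fun t => ℓ t v) ≤ u v) :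
    BddBelow (Set.range fun v => u v - h v) := by
  refine ⟨-(Finset.univ.sup' Finset.univ_nonempty a), ?_⟩
  rintro x ⟨v, rfl⟩
  obtain ⟨s, -, hs⟩ := Finset.exists_mem_eq_inf' (Finset.univ_nonempty)
    (fun t : Fin (r + 1) => ℓ t v)
  have h1 : h v ≤ ℓ s v + a s := by
    rw [hh v]
    exact Finset.inf'_le _ (Finset.mem_univ s)
  have h2 : ℓ s v ≤ u v := hs ▸ hu v
  have h3 : a s ≤ Finset.univ.sup' Finset.univ_nonempty a :=
    Finset.le_sup' _ (Finset.mem_univ s)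
  simp only
  linarith
end

section
/- Let k be a field, m ≥ 2, and consider polynomials L_ℓ = z_ℓ·A₀ + A₁ + A_ℓ for 2 ≤ ℓ ≤ m in a polynomial ring, where A₀,…,A_m are monomials in pairwise disjoint sets of variables and z₂,…,z_m ∈ k* are pairwise distinct. A point x of the vanishing locus V(L₂,…,L_m) is a singular point if and only if there exist at least three indices i ∈ {0,1,…,m} such that all partial derivatives of the monomial A_i vanish at x. -/
open MvPolynomial Finset

/-- Pick one index `≥ 2` among three distinct naturals with a property. -/
lemma stmt13_pick_one {P : ℕ → Prop} {a b c : ℕ} (hab : a ≠ b) (hac : a ≠ c) (hbc : b ≠ c)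
    (ha : P a) (hb : P b) (hc : P c) : ∃ u, P u ∧ 2 ≤ u := by
  by_cases h1 : 2 ≤ a
  · exact ⟨a, ha, h1⟩
  by_cases h2 : 2 ≤ b
  · exact ⟨b, hb, h2⟩
  by_cases h3 : 2 ≤ c
  · exact ⟨c, hc, h3⟩
  omega

/-- Pick two distinct indices `≥ 2` among three distinct naturals, none of which
equals a given forbidden value `t ≤ 1`. -/
lemma stmt13_pick_two {P : ℕ → Prop} {t a b c : ℕ} (ht : t ≤ 1)
    (hab : a ≠ b) (hac : a ≠ c) (hbc : b ≠ c)
    (ha : P a) (hb : P b) (hc : P c) (h1 : a ≠ t) (h2 : b ≠ t) (h3 : c ≠ t) :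
    ∃ u v, u ≠ v ∧ P u ∧ P v ∧ 2 ≤ u ∧ 2 ≤ v := by
  by_cases ha2 : 2 ≤ a
  · by_cases hb2 : 2 ≤ b
    · exact ⟨a, b, hab, ha, hb, ha2, hb2⟩
    · exact ⟨a, c, hac, ha, hc, ha2, by omega⟩
  · exact ⟨b, c, hbc, hb, hc, by omega, by omega⟩

open MvPolynomial Finset in
/-- Smoothness criterion for trinomial varieties: with `L_ℓ = z_ℓ·A₀ + A₁ + A_ℓ`
(`2 ≤ ℓ ≤ m`) where the `A_i` are monomials in pairwise disjoint sets of
variables and the `z_ℓ ∈ k*` are pairwise distinct, a point `x` of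
`V(L₂,…,L_m)` is singular (some nontrivial linear combination of the `L_ℓ` has
all partial derivatives vanishing at `x`) if and only if there are at least
three indices `i ∈ {0,…,m}` such that all partial derivatives of `A_i` vanish
at `x`. -/
theorem stmt13 {k : Type*} [Field k] {ι : Type*} [DecidableEq ι]
    (m : ℕ) (hm : 2 ≤ m)
    (A : ℕ → MvPolynomial ι k) (V : ℕ → Set ι)
    (hdisj : ∀ i j, i ≤ m → j ≤ m → i ≠ j → Disjoint (V i) (V j))
    (hsupp : ∀ i, i ≤ m → A i ∈ MvPolynomial.supported k (V i))
    (hmono : ∀ i, i ≤ m → ∃ dd : ι →₀ ℕ, A i = monomial dd (1 : k))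
    (z : ℕ → k) (hz0 : ∀ ℓ ∈ Icc 2 m, z ℓ ≠ 0)
    (hzd : Set.InjOn z (Icc 2 m : Finset ℕ))
    (L : ℕ → MvPolynomial ι k)
    (hL : ∀ ℓ, L ℓ = C (z ℓ) * A 0 + A 1 + A ℓ)
    (x : ι → k) (hx : ∀ ℓ ∈ Icc 2 m, eval x (L ℓ) = 0) :
    (∃ c : ℕ → k, (∃ ℓ ∈ Icc 2 m, c ℓ ≠ 0) ∧
        ∀ v : ι, eval x (pderiv v (∑ ℓ ∈ Icc 2 m, C (c ℓ) * L ℓ)) = 0) ↔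
      3 ≤ Nat.card {i : ℕ // i ≤ m ∧ ∀ v : ι, eval x (pderiv v (A i)) = 0} := by
  classical
  -- abbreviation for evaluated partial derivatives
  set E : ℕ → ι → k := fun i v => eval x (pderiv v (A i)) with hE
  -- partial derivatives vanish outside the variable group
  have hoff : ∀ i, i ≤ m → ∀ v, v ∉ V i → pderiv v (A i) = 0 := by
    intro i hi v hv
    obtain ⟨d, hd⟩ := hmono i hi
    have hvars : ↑(A i).vars ⊆ V i := (mem_supported).1 (hsupp i hi)
    have hvd : v ∉ d.support := by
      intro hmem
      apply hv
      apply hvars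
      rw [hd, vars_monomial (one_ne_zero)]
      exact_mod_cast hmem
    have hdv : d v = 0 := Finsupp.notMem_support_iff.1 hvd
    rw [hd, pderiv_monomial, hdv]
    simp
  have hcross : ∀ i j, i ≤ m → j ≤ m → i ≠ j → ∀ v, v ∈ V i → E j v = 0 := by
    intro i j hi hj hij v hv
    have : v ∉ V j := fun hvj => Set.disjoint_left.1 (hdisj i j hi hj hij) hv hvj
    simp [hE, hoff j hj v this]
  have h2m : (2 : ℕ) ≤ m := hm
  -- the basic formula for the derivative of a linear combination
  have hformula : ∀ (c : ℕ → k) (v : ι),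
      eval x (pderiv v (∑ ℓ ∈ Icc 2 m, C (c ℓ) * L ℓ)) =
      (∑ ℓ ∈ Icc 2 m, c ℓ * z ℓ) * E 0 v + (∑ ℓ ∈ Icc 2 m, c ℓ) * E 1 v +
      ∑ ℓ ∈ Icc 2 m, c ℓ * E ℓ v := by
    intro c v
    rw [map_sum, map_sum]
    have hterm : ∀ ℓ ∈ Icc 2 m, eval x (pderiv v (C (c ℓ) * L ℓ)) =
        c ℓ * z ℓ * E 0 v + c ℓ * E 1 v + c ℓ * E ℓ v := by
      intro ℓ _
      rw [hL]
      simp only [map_add, pderiv_C_mul, eval_add, eval_mul, eval_C, hE]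
      ring
    rw [Finset.sum_congr rfl hterm, Finset.sum_add_distrib, Finset.sum_add_distrib,
      ← Finset.sum_mul, ← Finset.sum_mul]
  -- the key implication: nonzero coefficients force vanishing of all partials.
  have hkey : ∀ (c : ℕ → k),
      (∀ v : ι, eval x (pderiv v (∑ ℓ ∈ Icc 2 m, C (c ℓ) * L ℓ)) = 0) →
      (((∑ ℓ ∈ Icc 2 m, c ℓ * z ℓ) ≠ 0 → ∀ v, E 0 v = 0) ∧
       ((∑ ℓ ∈ Icc 2 m, c ℓ) ≠ 0 → ∀ v, E 1 v = 0) ∧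
       (∀ ℓ ∈ Icc 2 m, c ℓ ≠ 0 → ∀ v, E ℓ v = 0)) := by
    intro c hvan
    have hformc : ∀ v, (∑ ℓ ∈ Icc 2 m, c ℓ * z ℓ) * E 0 v + (∑ ℓ ∈ Icc 2 m, c ℓ) * E 1 v +
        ∑ ℓ ∈ Icc 2 m, c ℓ * E ℓ v = 0 := fun v => (hformula c v) ▸ (hvan v)
    refine ⟨?_, ?_, ?_⟩
    · intro hα v
      by_cases hv : v ∈ V 0
      · have h1 : E 1 v = 0 := hcross 0 1 (by omega) (by omega) (by omega) v hv
        have h2 : ∑ ℓ ∈ Icc 2 m, c ℓ * E ℓ v = 0 := by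
          apply Finset.sum_eq_zero
          intro ℓ hℓ
          rw [mem_Icc] at hℓ
          rw [hcross 0 ℓ (by omega) (by omega) (by omega) v hv, mul_zero]
        have := hformc v
        rw [h1, h2, mul_zero, add_zero, add_zero] at this
        exact (mul_eq_zero.1 this).resolve_left hα
      · simp [hE, hoff 0 (by omega) v hv]
    · intro hβ v
      by_cases hv : v ∈ V 1
      · have h1 : E 0 v = 0 := hcross 1 0 (by omega) (by omega) (by omega) v hv
        have h2 : ∑ ℓ ∈ Icc 2 m, c ℓ * E ℓ v = 0 := by
          apply Finset.sum_eq_zero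
          intro ℓ hℓ
          rw [mem_Icc] at hℓ
          rw [hcross 1 ℓ (by omega) (by omega) (by omega) v hv, mul_zero]
        have := hformc v
        rw [h1, h2, mul_zero, zero_add, add_zero] at this
        exact (mul_eq_zero.1 this).resolve_left hβ
      · simp [hE, hoff 1 (by omega) v hv]
    · intro ℓ hℓ hcℓ v
      rw [mem_Icc] at hℓ
      by_cases hv : v ∈ V ℓ
      · have h0 : E 0 v = 0 := hcross ℓ 0 (by omega) (by omega) (by omega) v hv
        have h1 : E 1 v = 0 := hcross ℓ 1 (by omega) (by omega) (by omega) v hv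
        have h2 : ∑ ℓ' ∈ Icc 2 m, c ℓ' * E ℓ' v = c ℓ * E ℓ v := by
          apply Finset.sum_eq_single_of_mem ℓ (mem_Icc.2 hℓ)
          intro b hb hbne
          rw [mem_Icc] at hb
          rw [hcross ℓ b (by omega) (by omega) (Ne.symm hbne) v hv, mul_zero]
        have := hformc v
        rw [h0, h1, h2, mul_zero, mul_zero, zero_add, zero_add] at this
        exact (mul_eq_zero.1 this).resolve_left hcℓ
      · simp [hE, hoff ℓ (by omega) v hv]
  -- sum over a pair inside Icc
  have pairsum : ∀ (f : ℕ → k) (a b : ℕ), a ∈ Icc 2 m → b ∈ Icc 2 m → a ≠ b →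
      (∀ t ∈ Icc 2 m, t ≠ a → t ≠ b → f t = 0) → ∑ t ∈ Icc 2 m, f t = f a + f b := by
    intro f a b ha hb hab hzf
    have hsub : ({a, b} : Finset ℕ) ⊆ Icc 2 m := by
      intro t ht
      rcases Finset.mem_insert.1 ht with h | h
      · exact h ▸ ha
      · exact (Finset.mem_singleton.1 h) ▸ hb
    rw [← Finset.sum_subset hsub, Finset.sum_pair hab]
    intro t ht htn
    simp only [Finset.mem_insert, Finset.mem_singleton, not_or] at htn
    exact hzf t ht htn.1 htn.2
  -- sum over a triple inside Icc
  have triplesum : ∀ (f : ℕ → k) (a b c : ℕ), a ∈ Icc 2 m → b ∈ Icc 2 m → c ∈ Icc 2 m →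
      a ≠ b → a ≠ c → b ≠ c →
      (∀ t ∈ Icc 2 m, t ≠ a → t ≠ b → t ≠ c → f t = 0) →
      ∑ t ∈ Icc 2 m, f t = f a + f b + f c := by
    intro f a b c ha hb hc hab hac hbc hzf
    have hsub : ({a, b, c} : Finset ℕ) ⊆ Icc 2 m := by
      intro t ht
      simp only [Finset.mem_insert, Finset.mem_singleton] at ht
      rcases ht with h | h | h
      · exact h ▸ ha
      · exact h ▸ hb
      · exact h ▸ hc
    rw [← Finset.sum_subset hsub]
    · rw [Finset.sum_insert (by simp [hab, hac]), Finset.sum_pair hbc, add_assoc]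
    · intro t ht htn
      simp only [Finset.mem_insert, Finset.mem_singleton, not_or] at htn
      exact hzf t ht htn.1 htn.2.1 htn.2.2
  -- the cardinality reformulation
  set F : Finset ℕ := (Finset.range (m + 1)).filter (fun i => ∀ v, E i v = 0) with hF
  have hmemF : ∀ i, i ∈ F ↔ (i ≤ m ∧ ∀ v, E i v = 0) := by
    intro i
    simp [hF, Finset.mem_filter, Finset.mem_range, Nat.lt_succ_iff]
  have hcard : Nat.card {i : ℕ // i ≤ m ∧ ∀ v : ι, eval x (pderiv v (A i)) = 0} = F.card := by
    rw [← Nat.card_eq_finsetCard F]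
    exact Nat.card_congr (Equiv.subtypeEquivRight (fun i => ((hmemF i).symm)))
  rw [hcard, show (3 : ℕ) ≤ F.card ↔ 2 < F.card from Iff.rfl, Finset.two_lt_card_iff]
  constructor
  · -- singular point ⇒ three vanishing monomials
    rintro ⟨c, ⟨ℓ₀, hℓ₀, hc₀⟩, hvan⟩
    obtain ⟨h0, h1, h2⟩ := hkey c hvan
    have hℓ₀' := mem_Icc.1 hℓ₀
    have hDℓ₀ : ℓ₀ ∈ F := (hmemF ℓ₀).2 ⟨by omega, h2 ℓ₀ hℓ₀ hc₀⟩
    by_cases hα : (∑ ℓ ∈ Icc 2 m, c ℓ * z ℓ) = 0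
    · -- find a second nonzero coefficient
      have hsecond : ∃ ℓ₁ ∈ Icc 2 m, ℓ₁ ≠ ℓ₀ ∧ c ℓ₁ ≠ 0 := by
        by_contra hno
        push_neg at hno
        have : ∑ ℓ ∈ Icc 2 m, c ℓ * z ℓ = c ℓ₀ * z ℓ₀ := by
          apply Finset.sum_eq_single_of_mem ℓ₀ hℓ₀
          intro b hb hbne
          rw [hno b hb hbne, zero_mul]
        rw [this] at hα
        exact (mul_ne_zero hc₀ (hz0 ℓ₀ hℓ₀)) hα
      obtain ⟨ℓ₁, hℓ₁, hne10, hc₁⟩ := hsecond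
      have hℓ₁' := mem_Icc.1 hℓ₁
      have hDℓ₁ : ℓ₁ ∈ F := (hmemF ℓ₁).2 ⟨by omega, h2 ℓ₁ hℓ₁ hc₁⟩
      by_cases hβ : (∑ ℓ ∈ Icc 2 m, c ℓ) = 0
      · -- need a third nonzero coefficient
        have hthird : ∃ ℓ₂ ∈ Icc 2 m, ℓ₂ ≠ ℓ₀ ∧ ℓ₂ ≠ ℓ₁ ∧ c ℓ₂ ≠ 0 := by
          by_contra hno
          push_neg at hno
          have hα' : ∑ ℓ ∈ Icc 2 m, c ℓ * z ℓ = c ℓ₀ * z ℓ₀ + c ℓ₁ * z ℓ₁ := by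
            apply pairsum _ _ _ hℓ₀ hℓ₁ (Ne.symm hne10)
            intro t ht ht0 ht1
            rw [hno t ht ht0 ht1, zero_mul]
          have hβ' : ∑ ℓ ∈ Icc 2 m, c ℓ = c ℓ₀ + c ℓ₁ := by
            apply pairsum _ _ _ hℓ₀ hℓ₁ (Ne.symm hne10)
            intro t ht ht0 ht1
            exact hno t ht ht0 ht1
          rw [hα'] at hα
          rw [hβ'] at hβ
          have hzz : c ℓ₀ * (z ℓ₀ - z ℓ₁) = 0 := by linear_combination hα - z ℓ₁ * hβ
          have hzeq : z ℓ₀ = z ℓ₁ :=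
            sub_eq_zero.1 ((mul_eq_zero.1 hzz).resolve_left hc₀)
          exact hne10 (hzd (by exact_mod_cast hℓ₁) (by exact_mod_cast hℓ₀) hzeq.symm)
        obtain ⟨ℓ₂, hℓ₂, h20, h21, hc₂⟩ := hthird
        have hDℓ₂ : ℓ₂ ∈ F := (hmemF ℓ₂).2 ⟨(mem_Icc.1 hℓ₂).2, h2 ℓ₂ hℓ₂ hc₂⟩
        exact ⟨ℓ₀, ℓ₁, ℓ₂, hDℓ₀, hDℓ₁, hDℓ₂, Ne.symm hne10, Ne.symm h20, Ne.symm h21⟩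
      · -- β ≠ 0 : A₁ vanishes too
        have hD1 : (1 : ℕ) ∈ F := (hmemF 1).2 ⟨by omega, h1 hβ⟩
        exact ⟨1, ℓ₀, ℓ₁, hD1, hDℓ₀, hDℓ₁, by omega, by omega, Ne.symm hne10⟩
    · -- α ≠ 0 : A₀ vanishes
      have hD0 : (0 : ℕ) ∈ F := (hmemF 0).2 ⟨by omega, h0 hα⟩
      by_cases hβ : (∑ ℓ ∈ Icc 2 m, c ℓ) = 0
      · -- find a second nonzero coefficient from β = 0
        have hsecond : ∃ ℓ₁ ∈ Icc 2 m, ℓ₁ ≠ ℓ₀ ∧ c ℓ₁ ≠ 0 := by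
          by_contra hno
          push_neg at hno
          have : ∑ ℓ ∈ Icc 2 m, c ℓ = c ℓ₀ :=
            Finset.sum_eq_single_of_mem ℓ₀ hℓ₀ (fun b hb hbne => hno b hb hbne)
          rw [this] at hβ
          exact hc₀ hβ
        obtain ⟨ℓ₁, hℓ₁, hne10, hc₁⟩ := hsecond
        have hDℓ₁ : ℓ₁ ∈ F := (hmemF ℓ₁).2 ⟨(mem_Icc.1 hℓ₁).2, h2 ℓ₁ hℓ₁ hc₁⟩
        exact ⟨0, ℓ₀, ℓ₁, hD0, hDℓ₀, hDℓ₁, by omega, by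
          have := (mem_Icc.1 hℓ₁).1; omega, Ne.symm hne10⟩
      · have hD1 : (1 : ℕ) ∈ F := (hmemF 1).2 ⟨by omega, h1 hβ⟩
        exact ⟨0, 1, ℓ₀, hD0, hD1, hDℓ₀, by omega, by omega, by omega⟩
  · -- three vanishing monomials ⇒ singular point
    rintro ⟨a, b, c', haF, hbF, hcF, hab, hac, hbc⟩
    obtain ⟨ham, hDa⟩ := (hmemF a).1 haF
    obtain ⟨hbm, hDb⟩ := (hmemF b).1 hbF
    obtain ⟨hcm, hDc⟩ := (hmemF c').1 hcF
    -- a builder for the coefficient vector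
    have hbuild : ∀ (c : ℕ → k),
        ((∑ ℓ ∈ Icc 2 m, c ℓ * z ℓ) = 0 ∨ (∀ v, E 0 v = 0)) →
        ((∑ ℓ ∈ Icc 2 m, c ℓ) = 0 ∨ (∀ v, E 1 v = 0)) →
        (∀ ℓ ∈ Icc 2 m, c ℓ = 0 ∨ (∀ v, E ℓ v = 0)) →
        ∀ v : ι, eval x (pderiv v (∑ ℓ ∈ Icc 2 m, C (c ℓ) * L ℓ)) = 0 := by
      intro c hA hB hC v
      rw [hformula c v]
      have t1 : (∑ ℓ ∈ Icc 2 m, c ℓ * z ℓ) * E 0 v = 0 := by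
        rcases hA with h | h
        · rw [h, zero_mul]
        · rw [h v, mul_zero]
      have t2 : (∑ ℓ ∈ Icc 2 m, c ℓ) * E 1 v = 0 := by
        rcases hB with h | h
        · rw [h, zero_mul]
        · rw [h v, mul_zero]
      have t3 : ∑ ℓ ∈ Icc 2 m, c ℓ * E ℓ v = 0 := by
        apply Finset.sum_eq_zero
        intro ℓ hℓ
        rcases hC ℓ hℓ with h | h
        · rw [h, zero_mul]
        · rw [h v, mul_zero]
      rw [t1, t2, t3, add_zero, add_zero]
    set Q : ℕ → Prop := fun i => i ≤ m ∧ ∀ v, E i v = 0 with hQ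
    have hQa : Q a := ⟨ham, hDa⟩
    have hQb : Q b := ⟨hbm, hDb⟩
    have hQc : Q c' := ⟨hcm, hDc⟩
    by_cases hD0 : ∀ v, E 0 v = 0
    · by_cases hD1 : ∀ v, E 1 v = 0
      · -- A₀ and A₁ vanish: a single nonzero coefficient suffices
        obtain ⟨u, hQu, hu2⟩ := stmt13_pick_one hab hac hbc hQa hQb hQc
        have huI : u ∈ Icc 2 m := mem_Icc.2 ⟨hu2, hQu.1⟩
        refine ⟨fun ℓ => if ℓ = u then 1 else 0, ⟨u, huI, by simp⟩, ?_⟩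
        apply hbuild
        · exact Or.inr hD0
        · exact Or.inr hD1
        · intro ℓ hℓ
          by_cases h : ℓ = u
          · exact Or.inr (h ▸ hQu.2)
          · exact Or.inl (by simp [h])
      · -- A₁ does not vanish: need two indices ≥ 2, coefficients 1, -1
        have hne1 : a ≠ 1 ∧ b ≠ 1 ∧ c' ≠ 1 :=
          ⟨fun h => hD1 (h ▸ hDa), fun h => hD1 (h ▸ hDb), fun h => hD1 (h ▸ hDc)⟩
        obtain ⟨u, w, huw, hQu, hQw, hu2, hw2⟩ :=
          stmt13_pick_two (le_refl 1) hab hac hbc hQa hQb hQc hne1.1 hne1.2.1 hne1.2.2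
        have huI : u ∈ Icc 2 m := mem_Icc.2 ⟨hu2, hQu.1⟩
        have hwI : w ∈ Icc 2 m := mem_Icc.2 ⟨hw2, hQw.1⟩
        refine ⟨fun ℓ => if ℓ = u then 1 else if ℓ = w then -1 else 0,
          ⟨u, huI, by simp⟩, ?_⟩
        apply hbuild
        · exact Or.inr hD0
        · refine Or.inl ?_
          rw [pairsum _ u w huI hwI huw (by intro t ht ht1 ht2; simp [ht1, ht2])]
          simp [huw, Ne.symm huw]
        · intro ℓ hℓ
          by_cases h : ℓ = u
          · exact Or.inr (h ▸ hQu.2)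
          by_cases h' : ℓ = w
          · exact Or.inr (h' ▸ hQw.2)
          · exact Or.inl (by simp [h, h'])
    · have hne0 : a ≠ 0 ∧ b ≠ 0 ∧ c' ≠ 0 :=
        ⟨fun h => hD0 (h ▸ hDa), fun h => hD0 (h ▸ hDb), fun h => hD0 (h ▸ hDc)⟩
      obtain ⟨hna, hnb, hnc⟩ := hne0
      by_cases hD1 : ∀ v, E 1 v = 0
      · -- A₀ does not vanish, A₁ does: coefficients z w, -(z u)
        obtain ⟨u, w, huw, hQu, hQw, hu2, hw2⟩ :=
          stmt13_pick_two (Nat.zero_le 1) hab hac hbc hQa hQb hQc hna hnb hnc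
        have huI : u ∈ Icc 2 m := mem_Icc.2 ⟨hu2, hQu.1⟩
        have hwI : w ∈ Icc 2 m := mem_Icc.2 ⟨hw2, hQw.1⟩
        refine ⟨fun ℓ => if ℓ = u then z w else if ℓ = w then -(z u) else 0,
          ⟨u, huI, by simp [hz0 w hwI]⟩, ?_⟩
        apply hbuild
        · refine Or.inl ?_
          rw [pairsum _ u w huI hwI huw (by intro t ht ht1 ht2; simp [ht1, ht2])]
          split_ifs <;> first | omega | ring
        · exact Or.inr hD1
        · intro ℓ hℓ
          by_cases h : ℓ = u
          · exact Or.inr (h ▸ hQu.2)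
          by_cases h' : ℓ = w
          · exact Or.inr (h' ▸ hQw.2)
          · exact Or.inl (by simp [h, h'])
      · -- neither A₀ nor A₁ vanishes: three indices ≥ 2
        have hne1 : a ≠ 1 ∧ b ≠ 1 ∧ c' ≠ 1 :=
          ⟨fun h => hD1 (h ▸ hDa), fun h => hD1 (h ▸ hDb), fun h => hD1 (h ▸ hDc)⟩
        obtain ⟨hma, hmb, hmc⟩ := hne1
        have ha2 : 2 ≤ a := by omega
        have hb2 : 2 ≤ b := by omega
        have hc2 : 2 ≤ c' := by omega
        have haI : a ∈ Icc 2 m := mem_Icc.2 ⟨ha2, ham⟩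
        have hbI : b ∈ Icc 2 m := mem_Icc.2 ⟨hb2, hbm⟩
        have hcI : c' ∈ Icc 2 m := mem_Icc.2 ⟨hc2, hcm⟩
        have hzbc : z b ≠ z c' := fun h =>
          hbc (hzd (by exact_mod_cast hbI) (by exact_mod_cast hcI) h)
        refine ⟨fun ℓ => if ℓ = a then z b - z c' else if ℓ = b then z c' - z a
            else if ℓ = c' then z a - z b else 0,
          ⟨a, haI, by simpa using sub_ne_zero.2 hzbc⟩, ?_⟩
        apply hbuild
        · refine Or.inl ?_
          rw [triplesum _ a b c' haI hbI hcI hab hac hbc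
            (by intro t ht ht1 ht2 ht3; simp [ht1, ht2, ht3])]
          split_ifs <;> first | omega | ring
        · refine Or.inl ?_
          rw [triplesum _ a b c' haI hbI hcI hab hac hbc
            (by intro t ht ht1 ht2 ht3; simp [ht1, ht2, ht3])]
          split_ifs <;> first | omega | ring
        · intro ℓ hℓ
          by_cases h : ℓ = a
          · exact Or.inr (h ▸ hQa.2)
          by_cases h' : ℓ = b
          · exact Or.inr (h' ▸ hQb.2)
          by_cases h'' : ℓ = c'
          · exact Or.inr (h'' ▸ hQc.2)
          · exact Or.inl (by simp [h, h', h''])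
end

section
/- Let z₂,…,z_m ∈ k* be pairwise distinct nonzero elements of a field k. Then every nonzero vector in the k-span of the vectors v_ℓ = z_ℓ·e₀ + e₁ + e_ℓ ∈ k^{m+1} (for 2 ≤ ℓ ≤ m, with e₀,…,e_m the standard basis) has at least three nonzero coordinates. -/
open Classical


/-- Let `z₂, …, z_m` be pairwise distinct nonzero elements of a field `k`. Every
nonzero vector in the `k`-span of the vectors `v_ℓ = z_ℓ·e₀ + e₁ + e_ℓ`
(`2 ≤ ℓ ≤ m`) has at least three nonzero coordinates. -/
theorem stmt14 {k : Type*} [Field k] (m : ℕ) (hm : 2 ≤ m) (z : ℕ → k)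
    (hz0 : ∀ ℓ ∈ Finset.Icc 2 m, z ℓ ≠ 0)
    (hzd : Set.InjOn z (Finset.Icc 2 m : Finset ℕ))
    (c : ℕ → k) (w : ℕ → k)
    (hw : w = ∑ ℓ ∈ Finset.Icc 2 m,
      c ℓ • (z ℓ • (Pi.single 0 1 : ℕ → k) + (Pi.single 1 1 : ℕ → k)
        + (Pi.single ℓ 1 : ℕ → k)))
    (hne : w ≠ 0) :
    3 ≤ Nat.card {i : ℕ // i ≤ m ∧ w i ≠ 0} := by
  have hval : ∀ i, w i = ∑ ℓ ∈ Finset.Icc 2 m,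
      c ℓ * (z ℓ * (Pi.single 0 1 : ℕ → k) i + (Pi.single 1 1 : ℕ → k) i
        + (Pi.single ℓ 1 : ℕ → k) i) := by
    intro i
    simp [hw, Finset.sum_apply, Pi.smul_apply, smul_eq_mul, mul_add]
  have h0 : w 0 = ∑ ℓ ∈ Finset.Icc 2 m, c ℓ * z ℓ := by
    rw [hval]
    refine Finset.sum_congr rfl fun ℓ hℓ => ?_
    have h2 : 2 ≤ ℓ := (Finset.mem_Icc.mp hℓ).1
    rw [Pi.single_eq_same, Pi.single_eq_of_ne (by omega : (0:ℕ) ≠ 1),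
      Pi.single_eq_of_ne (by omega : (0:ℕ) ≠ ℓ)]
    ring
  have h1 : w 1 = ∑ ℓ ∈ Finset.Icc 2 m, c ℓ := by
    rw [hval]
    refine Finset.sum_congr rfl fun ℓ hℓ => ?_
    have h2 : 2 ≤ ℓ := (Finset.mem_Icc.mp hℓ).1
    rw [Pi.single_eq_same, Pi.single_eq_of_ne (by omega : (1:ℕ) ≠ 0),
      Pi.single_eq_of_ne (by omega : (1:ℕ) ≠ ℓ)]
    ring
  have hc : ∀ j ∈ Finset.Icc 2 m, w j = c j := by
    intro j hj
    have h2 : 2 ≤ j := (Finset.mem_Icc.mp hj).1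
    rw [hval]
    rw [Finset.sum_eq_single j]
    · rw [Pi.single_eq_same, Pi.single_eq_of_ne (by omega : (j:ℕ) ≠ 0),
        Pi.single_eq_of_ne (by omega : (j:ℕ) ≠ 1)]
      ring
    · intro ℓ hℓ hne'
      rw [Pi.single_eq_of_ne (by omega : (j:ℕ) ≠ 0),
        Pi.single_eq_of_ne (by omega : (j:ℕ) ≠ 1),
        Pi.single_eq_of_ne (Ne.symm hne')]
      ring
    · exact fun h => absurd hj h
  -- the set of nonzero coefficient indices
  set S := (Finset.Icc 2 m).filter (fun ℓ => c ℓ ≠ 0) with hS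
  have hSsub : S ⊆ Finset.Icc 2 m := Finset.filter_subset _ _
  have hSne : S.Nonempty := by
    by_contra h
    rw [Finset.not_nonempty_iff_eq_empty] at h
    apply hne
    funext i
    rw [hval]
    refine (Finset.sum_eq_zero fun ℓ hℓ => ?_).trans rfl
    have : c ℓ = 0 := by
      have h' := Finset.filter_eq_empty_iff.mp (hS ▸ h) hℓ
      simpa using h'
    simp [this]
  -- reduce sums to S
  have hsum0 : w 0 = ∑ ℓ ∈ S, c ℓ * z ℓ := by
    rw [h0]
    refine (Finset.sum_filter_of_ne fun ℓ hℓ h => ?_).symm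
    intro hc0; apply h; rw [hc0]; ring
  have hsum1 : w 1 = ∑ ℓ ∈ S, c ℓ := by
    rw [h1]
    exact (Finset.sum_filter_of_ne fun ℓ hℓ h => h).symm
  -- final reduction to ncard
  have hset : Nat.card {i : ℕ // i ≤ m ∧ w i ≠ 0} = Set.ncard {i : ℕ | i ≤ m ∧ w i ≠ 0} :=
    Nat.card_coe_set_eq _
  have hfin : Set.Finite {i : ℕ | i ≤ m ∧ w i ≠ 0} :=
    Set.Finite.subset (Set.finite_Iic m) fun i hi => hi.1
  rw [hset]
  rw [show (3:ℕ) = 2 + 1 from rfl, Nat.add_one_le_iff]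
  rw [Set.two_lt_ncard hfin]
  -- helper for membership
  have memS : ∀ a ∈ S, a ∈ {i : ℕ | i ≤ m ∧ w i ≠ 0} := by
    intro a ha
    have ha' := hSsub ha
    have hm' := (Finset.mem_Icc.mp ha').2
    have hca := (Finset.mem_filter.mp ha).2
    exact ⟨hm', by rw [hc a ha']; exact hca⟩
  -- case on card of S
  rcases Nat.lt_or_ge S.card 3 with hcard | hcard
  · interval_cases h : S.card
    · exact absurd (Finset.card_eq_zero.mp h) (Finset.nonempty_iff_ne_empty.mp hSne)
    · -- one element a
      obtain ⟨a, ha⟩ := Finset.card_eq_one.mp h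
      have haS : a ∈ S := by rw [ha]; exact Finset.mem_singleton_self a
      have ha' := hSsub haS
      have h2a : 2 ≤ a := (Finset.mem_Icc.mp ha').1
      have hca : c a ≠ 0 := (Finset.mem_filter.mp haS).2
      have hw0 : w 0 ≠ 0 := by
        rw [hsum0, ha, Finset.sum_singleton]
        exact mul_ne_zero hca (hz0 a ha')
      have hw1 : w 1 ≠ 0 := by rw [hsum1, ha, Finset.sum_singleton]; exact hca
      exact ⟨0, ⟨by omega, hw0⟩, 1, ⟨by omega, hw1⟩, a, memS a haS,
        by omega, by omega, by omega⟩
    · -- two elements a b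
      obtain ⟨a, b, hab, hS2⟩ := Finset.card_eq_two.mp h
      have haS : a ∈ S := by rw [hS2]; simp
      have hbS : b ∈ S := by rw [hS2]; simp
      have ha' := hSsub haS
      have hb' := hSsub hbS
      have hca : c a ≠ 0 := (Finset.mem_filter.mp haS).2
      have hcb : c b ≠ 0 := (Finset.mem_filter.mp hbS).2
      by_cases h1' : w 1 ≠ 0
      · exact ⟨1, ⟨by omega, h1'⟩, a, memS a haS, b, memS b hbS,
          by have := (Finset.mem_Icc.mp ha').1; omega,
          by have := (Finset.mem_Icc.mp hb').1; omega, hab⟩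
      · push_neg at h1'
        have hcb' : c b = -c a := by
          have h00 : c a + c b = 0 := by
            have := h1'
            rw [hsum1, hS2, Finset.sum_insert (by simpa using hab), Finset.sum_singleton] at this
            exact this
          exact eq_neg_of_add_eq_zero_left (by linear_combination h00)
        have hw0 : w 0 ≠ 0 := by
          rw [hsum0, hS2, Finset.sum_insert (by simpa using hab), Finset.sum_singleton, hcb']
          have hzz : z a ≠ z b := fun hEq => hab (hzd (by simpa using ha') (by simpa using hb') hEq)
          have : c a * z a + -c a * z b = c a * (z a - z b) := by ring
          rw [this]
          exact mul_ne_zero hca (sub_ne_zero.mpr hzz)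
        exact ⟨0, ⟨by omega, hw0⟩, a, memS a haS, b, memS b hbS,
          by have := (Finset.mem_Icc.mp ha').1; omega,
          by have := (Finset.mem_Icc.mp hb').1; omega, hab⟩
  · -- three elements of S
    obtain ⟨a, b, d, haS, hbS, hdS, hab, had, hbd⟩ :=
      Finset.two_lt_card_iff.mp (by omega : 2 < S.card)
    exact ⟨a, memS a haS, b, memS b hbS, d, memS d hdS, hab, had, hbd⟩
end
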